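/- Let V be a d-dimensional vector space over the field F₂ with two elements and let H be a (finite) subgroup of GL(V). Let x₁, …, x_k be a complete set of representatives of the conjugacy classes of elements of prime order in H. If 2^d > Σ_{i=1}^{k} |x_i^H| · 2^{dim C_V(x_i)}, where x_i^H denotes the conjugacy class of x_i in H, then H has a regular orbit on V, i.e., there exists v ∈ V whose stabiliser in H is the trivial subgroup. -/

import Mathlib

section Aux

variable {V : Type*} [AddCommGroup V] [Module (ZMod 2) V] [FiniteDimensional (ZMod 2) V]

private lemma finrank_ker_conj_aux (x y g : LinearMap.GeneralLinearGroup (ZMod 2) V)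
    (h : g * x = y * g) :
    Module.finrank (ZMod 2)
      (LinearMap.ker (((y : LinearMap.GeneralLinearGroup (ZMod 2) V) : V →ₗ[ZMod 2] V)
        - LinearMap.id)) =
    Module.finrank (ZMod 2)
      (LinearMap.ker (((x : LinearMap.GeneralLinearGroup (ZMod 2) V) : V →ₗ[ZMod 2] V)
        - LinearMap.id)) := by
  set e := LinearMap.GeneralLinearGroup.generalLinearEquiv (ZMod 2) V g with he
  have hker : LinearMap.ker (((y : LinearMap.GeneralLinearGroup (ZMod 2) V) : V →ₗ[ZMod 2] V)
        - LinearMap.id) =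
      Submodule.map (e : V →ₗ[ZMod 2] V)
        (LinearMap.ker (((x : LinearMap.GeneralLinearGroup (ZMod 2) V) : V →ₗ[ZMod 2] V)
          - LinearMap.id)) := by
    ext v
    rw [Submodule.mem_map_equiv, LinearMap.mem_ker, LinearMap.mem_ker, LinearMap.sub_apply,
      LinearMap.sub_apply, LinearMap.id_apply, LinearMap.id_apply, sub_eq_zero, sub_eq_zero]
    have happ : ∀ w : V, (g : V →ₗ[ZMod 2] V) ((x : V →ₗ[ZMod 2] V) w)
        = (y : V →ₗ[ZMod 2] V) ((g : V →ₗ[ZMod 2] V) w) := by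
      intro w
      have := congrArg (fun u : LinearMap.GeneralLinearGroup (ZMod 2) V =>
        ((u : V →ₗ[ZMod 2] V)) w) h
      simpa [Module.End.mul_apply] using this
    have hev : ∀ w : V, e w = (g : V →ₗ[ZMod 2] V) w := fun w => rfl
    constructor
    · intro hv
      apply e.injective
      rw [hev, happ, ← hev, LinearEquiv.apply_symm_apply, hv]
    · intro hv
      have := congrArg (g : V →ₗ[ZMod 2] V) hv
      rw [happ, ← hev, LinearEquiv.apply_symm_apply] at this
      exact this
  rw [hker, LinearEquiv.finrank_map_eq]

private lemma nat_card_sigma' {ι : Type*} [Fintype ι] (f : ι → Type*) [∀ i, Finite (f i)] :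
    Nat.card (Σ i, f i) = ∑ i, Nat.card (f i) := by
  letI : ∀ i, Fintype (f i) := fun i => Fintype.ofFinite _
  simp [Nat.card_eq_fintype_card, Fintype.card_sigma]

private lemma card_submodule (hV : Finite V) (W : Submodule (ZMod 2) V) :
    Nat.card W = 2 ^ Module.finrank (ZMod 2) W := by
  letI : Fintype W := Fintype.ofFinite W
  rw [Nat.card_eq_fintype_card, Module.card_eq_pow_finrank (K := ZMod 2), ZMod.card]

end Aux

/-- If `V` is a `d`-dimensional vector space over `𝔽₂`, `H ≤ GL(V)` and `x₁, …, x_k` is a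
complete set of representatives of the conjugacy classes of elements of prime order in `H`,
then `H` has a regular orbit on `V` provided
`2^d > Σᵢ |xᵢ^H| · 2^{dim C_V(xᵢ)}`. -/
theorem stmt1 {V : Type*} [AddCommGroup V] [Module (ZMod 2) V]
    [FiniteDimensional (ZMod 2) V] {d : ℕ} (hd : Module.finrank (ZMod 2) V = d)
    (H : Subgroup (LinearMap.GeneralLinearGroup (ZMod 2) V))
    (R : Finset H)
    (hprime : ∀ x ∈ R, (orderOf x).Prime)
    (hrep : ∀ y : H, (orderOf y).Prime → ∃ x ∈ R, IsConj x y)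
    (hdist : ∀ x ∈ R, ∀ y ∈ R, IsConj x y → x = y)
    (hineq : 2 ^ d > ∑ x ∈ R, Nat.card { y : H // IsConj x y } *
      2 ^ (Module.finrank (ZMod 2)
        (LinearMap.ker (((x : LinearMap.GeneralLinearGroup (ZMod 2) V) : V →ₗ[ZMod 2] V)
          - LinearMap.id)))) :
    ∃ v : V, MulAction.stabilizer H v = ⊥ := by
  classical
  have hV : Finite V := Module.finite_of_finite (ZMod 2)
  have hLM : Finite (V →ₗ[ZMod 2] V) := Finite.of_injective _ LinearMap.coe_injective
  have hGL : Finite (LinearMap.GeneralLinearGroup (ZMod 2) V) :=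
    Finite.of_injective (Units.val) (fun _ _ h => Units.ext h)
  by_contra hcon
  push_neg at hcon
  -- every vector is fixed by some conjugate of some representative
  have key : ∀ v : V, ∃ x : R, ∃ y : {y : H // IsConj (x : H) y},
      v ∈ LinearMap.ker ((((y : H) : LinearMap.GeneralLinearGroup (ZMod 2) V) : V →ₗ[ZMod 2] V)
        - LinearMap.id) := by
    intro v
    have hne := hcon v
    have : ∃ y ∈ MulAction.stabilizer H v, y ≠ 1 := by
      by_contra h
      push_neg at h
      exact hne ((Subgroup.eq_bot_iff_forall _).mpr h)
    obtain ⟨y, hy, hy1⟩ := this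
    have hn1 : orderOf y ≠ 1 := by simpa [orderOf_eq_one_iff] using hy1
    have hn0 : orderOf y ≠ 0 := (orderOf_pos y).ne'
    set p := (orderOf y).minFac with hp
    have hpprime : p.Prime := Nat.minFac_prime hn1
    set z := y ^ (orderOf y / p) with hz
    have hzo : orderOf z = p := by
      rw [hz, orderOf_pow, Nat.gcd_eq_right (Nat.div_dvd_of_dvd ((orderOf y).minFac_dvd)),
        Nat.div_div_self ((orderOf y).minFac_dvd) hn0]
    have hzs : z ∈ MulAction.stabilizer H v := pow_mem hy _
    obtain ⟨x, hxR, hxz⟩ := hrep z (hzo ▸ hpprime)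
    refine ⟨⟨x, hxR⟩, ⟨z, hxz⟩, ?_⟩
    have hfix : ((z : LinearMap.GeneralLinearGroup (ZMod 2) V) : V →ₗ[ZMod 2] V) v = v := hzs
    simp [LinearMap.mem_ker, LinearMap.sub_apply, hfix, sub_eq_zero]
  -- the injection
  let T := Σ x : R, Σ y : {y : H // IsConj (x : H) y},
    (LinearMap.ker ((((y : H) : LinearMap.GeneralLinearGroup (ZMod 2) V) : V →ₗ[ZMod 2] V)
      - LinearMap.id))
  let f : V → T := fun v =>
    ⟨(key v).choose, (key v).choose_spec.choose, ⟨v, (key v).choose_spec.choose_spec⟩⟩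
  have hf : Function.Injective f := by
    intro v w h
    have := congrArg (fun t : T => (t.2.2 : V)) h
    simpa [f] using this
  have hcard : Nat.card V ≤ Nat.card T := Nat.card_le_card_of_injective f hf
  have hVcard : Nat.card V = 2 ^ d := by
    letI : Fintype V := Fintype.ofFinite V
    rw [Nat.card_eq_fintype_card, Module.card_eq_pow_finrank (K := ZMod 2), ZMod.card, hd]
  have hTcard : Nat.card T = ∑ x ∈ R, Nat.card { y : H // IsConj x y } *
      2 ^ (Module.finrank (ZMod 2)
        (LinearMap.ker (((x : LinearMap.GeneralLinearGroup (ZMod 2) V) : V →ₗ[ZMod 2] V)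
          - LinearMap.id))) := by
    rw [show T = _ from rfl, nat_card_sigma']
    rw [← Finset.sum_attach R (fun x => Nat.card { y : H // IsConj x y } *
      2 ^ (Module.finrank (ZMod 2)
        (LinearMap.ker (((x : LinearMap.GeneralLinearGroup (ZMod 2) V) : V →ₗ[ZMod 2] V)
          - LinearMap.id))))]
    apply Finset.sum_congr rfl
    intro x _
    letI : Fintype {y : H // IsConj (x : H) y} := Fintype.ofFinite _
    rw [nat_card_sigma']
    have : ∀ y : {y : H // IsConj (x : H) y},
        Nat.card (LinearMap.ker ((((y : H) : LinearMap.GeneralLinearGroup (ZMod 2) V) :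
          V →ₗ[ZMod 2] V) - LinearMap.id)) =
        2 ^ (Module.finrank (ZMod 2)
          (LinearMap.ker ((((x : H) : LinearMap.GeneralLinearGroup (ZMod 2) V) :
            V →ₗ[ZMod 2] V) - LinearMap.id))) := by
      intro y
      rw [card_submodule hV]
      congr 1
      obtain ⟨g, hg⟩ := y.2
      have hg' : (g : LinearMap.GeneralLinearGroup (ZMod 2) V) * ((x : H) :
          LinearMap.GeneralLinearGroup (ZMod 2) V) = (((y : H) :
          LinearMap.GeneralLinearGroup (ZMod 2) V)) * g := by
        have h2 : (g * (x : H) : H) = ((y : H) * g : H) := hg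
        simpa [map_mul] using congrArg (Subgroup.subtype H) h2
      exact finrank_ker_conj_aux _ _ _ hg'
    simp_rw [this]
    rw [Finset.sum_const, Finset.card_univ, smul_eq_mul, Nat.card_eq_fintype_card]
  rw [hVcard, hTcard] at hcard
  exact absurd hcard (not_le.mpr hineq)
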